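/- Let p > 3 be a prime and λ ∈ F_p with λ ∉ {0, 1, −1}. Then #{(u, v) ∈ F_p × F_p : v² = u⁴ + 2λu² + 1} + 1 = #{(x, y) ∈ F_p × F_p : y² = x³ + 2λx² − 4x − 8λ}. -/

import Mathlib

open Finset

section aux
variable {p : ℕ} [Fact p.Prime]

private lemma chi_card (hp2 : ringChar (ZMod p) ≠ 2) (a : ZMod p) :
    ((univ.filter fun y : ZMod p => y ^ 2 = a).card : ℤ) =
      quadraticChar (ZMod p) a + 1 := by
  have := quadraticChar_card_sqrts hp2 a
  rwa [show {x : ZMod p | x ^ 2 = a}.toFinset = univ.filter fun y : ZMod p => y ^ 2 = a by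
    ext x; simp] at this

private lemma sum_sq (hp2 : ringChar (ZMod p) ≠ 2) (F : ZMod p → ℤ) :
    ∑ a : ZMod p, F (a ^ 2) = ∑ b : ZMod p, (quadraticChar (ZMod p) b + 1) * F b := by
  rw [← Finset.sum_fiberwise' univ (fun a : ZMod p => a ^ 2) F]
  refine Finset.sum_congr rfl fun b _ => ?_
  rw [Finset.sum_const, ← chi_card hp2 b]
  simp [mul_comm]

private lemma sum_shift (hp2 : ringChar (ZMod p) ≠ 2) (c : ZMod p) :
    ∑ b : ZMod p, quadraticChar (ZMod p) (b + c) = 0 := by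
  have := Equiv.sum_comp (Equiv.addRight c) fun x => quadraticChar (ZMod p) x
  simp only [Equiv.coe_addRight] at this
  rw [this, quadraticChar_sum_zero hp2]

private lemma sum_mul_shift (hp2 : ringChar (ZMod p) ≠ 2) {c : ZMod p} (hc : c ≠ 0) :
    ∑ b : ZMod p, quadraticChar (ZMod p) b * quadraticChar (ZMod p) (b + c) = -1 := by
  have h0 : ∑ b : ZMod p, quadraticChar (ZMod p) b * quadraticChar (ZMod p) (b + c)
      = ∑ b ∈ univ.erase (0 : ZMod p),
          quadraticChar (ZMod p) b * quadraticChar (ZMod p) (b + c) := by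
    rw [Finset.sum_erase]
    simp
  rw [h0]
  have key : ∑ b ∈ univ.erase (0 : ZMod p),
      quadraticChar (ZMod p) b * quadraticChar (ZMod p) (b + c)
      = ∑ s ∈ univ.erase (1 : ZMod p), quadraticChar (ZMod p) s := by
    refine Finset.sum_nbij' (fun b => 1 + c * b⁻¹) (fun s => c * (s - 1)⁻¹) ?_ ?_ ?_ ?_ ?_
    · intro b hb
      have hb0 : b ≠ 0 := by simpa using hb
      simp only [mem_erase, mem_univ, and_true]
      intro h
      have h' : c * b⁻¹ = 0 := by linear_combination h
      rcases mul_eq_zero.mp h' with h'' | h''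
      · exact hc h''
      · exact hb0 (inv_eq_zero.mp h'')
    · intro s hs
      have hs1 : s ≠ 1 := by simpa using hs
      simp only [mem_erase, mem_univ, and_true]
      intro h
      rcases mul_eq_zero.mp h with h' | h'
      · exact hc h'
      · exact hs1 (by have := inv_eq_zero.mp h'; linear_combination this)
    · intro b hb
      have hb0 : b ≠ 0 := by simpa using hb
      field_simp
      simp [hc]
    · intro s hs
      have hs1 : s ≠ 1 := by simpa using hs
      have hsub : s - 1 ≠ 0 := sub_ne_zero.mpr hs1
      field_simp
      ring
    · intro b hb
      have hb0 : b ≠ 0 := by simpa using hb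
      have key2 : b * (b + c) = b ^ 2 * (1 + c * b⁻¹) := by field_simp
      rw [← map_mul, key2, map_mul, quadraticChar_sq_one' hb0, one_mul]
  rw [key, Finset.sum_erase_eq_sub (by simp), quadraticChar_sum_zero hp2]
  simp

private lemma sum_sq_add (hp2 : ringChar (ZMod p) ≠ 2) {c : ZMod p} (hc : c ≠ 0) :
    ∑ a : ZMod p, quadraticChar (ZMod p) (a ^ 2 + c) = -1 := by
  rw [sum_sq hp2 (fun b => quadraticChar (ZMod p) (b + c))]
  have e : ∑ b : ZMod p, (quadraticChar (ZMod p) b + 1) * quadraticChar (ZMod p) (b + c)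
      = (∑ b : ZMod p, quadraticChar (ZMod p) b * quadraticChar (ZMod p) (b + c))
        + ∑ b : ZMod p, quadraticChar (ZMod p) (b + c) := by
    rw [← Finset.sum_add_distrib]
    exact Finset.sum_congr rfl fun b _ => by ring
  rw [e, sum_mul_shift hp2 hc, sum_shift hp2 c]
  ring

private lemma count_eq (hp2 : ringChar (ZMod p) ≠ 2) (G : ZMod p → ZMod p) :
    ((univ.filter fun uv : ZMod p × ZMod p => uv.2 ^ 2 = G uv.1).card : ℤ)
      = p + ∑ u : ZMod p, quadraticChar (ZMod p) (G u) := by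
  have e : (univ.filter fun uv : ZMod p × ZMod p => uv.2 ^ 2 = G uv.1).card
      = ∑ u : ZMod p, (univ.filter fun v : ZMod p => v ^ 2 = G u).card := by
    rw [Finset.card_filter, Fintype.sum_prod_type]
    exact Finset.sum_congr rfl fun u _ => by rw [Finset.card_filter]
  rw [e, Nat.cast_sum,
    Finset.sum_congr rfl fun u (_ : u ∈ univ) => chi_card hp2 (G u),
    Finset.sum_add_distrib]
  simp [add_comm, ZMod.card]

private lemma conic_sum (hp2 : ringChar (ZMod p) ≠ 2) (h2 : (2 : ZMod p) ≠ 0)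
    (h4 : (4 : ZMod p) ≠ 0) (d : ZMod p) :
    ∑ xy ∈ univ.filter (fun xy : ZMod p × ZMod p => xy.2 ^ 2 = xy.1 ^ 2 - 4),
        quadraticChar (ZMod p) (xy.1 + d)
      = ∑ w : ZMod p, quadraticChar (ZMod p) (w * (w ^ 2 + d * w + 1)) := by
  have h0 : ∑ w : ZMod p, quadraticChar (ZMod p) (w * (w ^ 2 + d * w + 1))
      = ∑ w ∈ univ.erase (0 : ZMod p),
          quadraticChar (ZMod p) (w * (w ^ 2 + d * w + 1)) := by
    rw [Finset.sum_erase]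
    simp
  rw [h0]
  refine (Finset.sum_nbij' (fun w : ZMod p => ((w + w⁻¹, w⁻¹ - w) : ZMod p × ZMod p))
    (fun xy : ZMod p × ZMod p => (xy.1 - xy.2) / 2) ?_ ?_ ?_ ?_ ?_).symm
  · intro w hw
    have hw0 : w ≠ 0 := by simpa using hw
    simp only [mem_filter, mem_univ, true_and]
    field_simp
    ring
  · intro xy hxy
    have hxy' : xy.2 ^ 2 = xy.1 ^ 2 - 4 := by simpa using hxy
    simp only [mem_erase, mem_univ, and_true]
    intro h
    rw [div_eq_zero_iff] at h
    rcases h with h | h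
    · exact h4 (by linear_combination hxy' + (xy.1 + xy.2) * h)
    · exact h2 h
  · intro w hw
    have hw0 : w ≠ 0 := by simpa using hw
    simp only
    field_simp
    ring
  · intro xy hxy
    have hxy' : xy.2 ^ 2 = xy.1 ^ 2 - 4 := by simpa using hxy
    have hne : xy.1 - xy.2 ≠ 0 := by
      intro h
      exact h4 (by linear_combination hxy' + (xy.1 + xy.2) * h)
    have hinv : ((xy.1 - xy.2) / 2)⁻¹ = (xy.1 + xy.2) / 2 := by
      rw [inv_eq_of_mul_eq_one_right]
      field_simp
      linear_combination -hxy'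
    simp only [hinv]
    have e1 : (xy.1 - xy.2) / 2 + (xy.1 + xy.2) / 2 = xy.1 := by field_simp; ring
    have e2 : (xy.1 + xy.2) / 2 - (xy.1 - xy.2) / 2 = xy.2 := by field_simp; ring
    rw [e1, e2]
  · intro w hw
    have hw0 : w ≠ 0 := by simpa using hw
    have key : w * (w ^ 2 + d * w + 1) = w ^ 2 * ((w + w⁻¹) + d) := by
      field_simp; ring
    simp only
    rw [key, map_mul, quadraticChar_sq_one' hw0, one_mul]

end aux

theorem jacobi_weierstrass_count (p : ℕ) [Fact p.Prime] (hp : 3 < p)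
    (l : ZMod p) (hl0 : l ≠ 0) (hl1 : l ≠ 1) (hlm1 : l ≠ -1) :
    (Finset.univ.filter (fun uv : ZMod p × ZMod p =>
        uv.2 ^ 2 = uv.1 ^ 4 + 2 * l * uv.1 ^ 2 + 1)).card + 1 =
      (Finset.univ.filter (fun xy : ZMod p × ZMod p =>
        xy.2 ^ 2 = xy.1 ^ 3 + 2 * l * xy.1 ^ 2 - 4 * xy.1 - 8 * l)).card := by
  have hp2 : ringChar (ZMod p) ≠ 2 := by
    rw [ZMod.ringChar_zmod_n]; omega
  have h2 : (2 : ZMod p) ≠ 0 := by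
    have hne : ¬ (p ∣ 2) := by
      intro h
      have := Nat.le_of_dvd (by norm_num) h
      omega
    have := (ZMod.natCast_eq_zero_iff 2 p).not.mpr hne
    simpa using this
  have h4 : (4 : ZMod p) ≠ 0 := by
    have e : (4 : ZMod p) = 2 * 2 := by norm_num
    rw [e]
    exact mul_ne_zero h2 h2
  have hc : (1 : ZMod p) - l ^ 2 ≠ 0 := by
    intro h
    have h' : (1 - l) * (1 + l) = 0 := by linear_combination h
    rcases mul_eq_zero.mp h' with h'' | h''
    · exact hl1 (by linear_combination -h'')
    · exact hlm1 (by linear_combination h'')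
  have hq : ((Finset.univ.filter (fun uv : ZMod p × ZMod p =>
      uv.2 ^ 2 = uv.1 ^ 4 + 2 * l * uv.1 ^ 2 + 1)).card : ℤ)
      = p + ∑ u : ZMod p, quadraticChar (ZMod p) (u ^ 4 + 2 * l * u ^ 2 + 1) :=
    count_eq hp2 (fun u => u ^ 4 + 2 * l * u ^ 2 + 1)
  have hw : ((Finset.univ.filter (fun xy : ZMod p × ZMod p =>
      xy.2 ^ 2 = xy.1 ^ 3 + 2 * l * xy.1 ^ 2 - 4 * xy.1 - 8 * l)).card : ℤ)
      = p + ∑ x : ZMod p, quadraticChar (ZMod p) (x ^ 3 + 2 * l * x ^ 2 - 4 * x - 8 * l) :=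
    count_eq hp2 (fun x => x ^ 3 + 2 * l * x ^ 2 - 4 * x - 8 * l)
  have hA : ∑ u : ZMod p, quadraticChar (ZMod p) (u ^ 4 + 2 * l * u ^ 2 + 1)
      = (∑ b : ZMod p, quadraticChar (ZMod p) (b * (b ^ 2 + 2 * l * b + 1))) - 1 := by
    rw [Finset.sum_congr rfl fun u (_ : u ∈ univ) =>
      by rw [show u ^ 4 + 2 * l * u ^ 2 + 1 = (u ^ 2) ^ 2 + 2 * l * (u ^ 2) + 1 from by ring]]
    rw [sum_sq hp2 (fun b => quadraticChar (ZMod p) (b ^ 2 + 2 * l * b + 1))]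
    have e2 : ∑ b : ZMod p,
        (quadraticChar (ZMod p) b + 1) * quadraticChar (ZMod p) (b ^ 2 + 2 * l * b + 1)
        = (∑ b : ZMod p, quadraticChar (ZMod p) (b * (b ^ 2 + 2 * l * b + 1)))
          + ∑ b : ZMod p, quadraticChar (ZMod p) (b ^ 2 + 2 * l * b + 1) := by
      rw [← Finset.sum_add_distrib]
      refine Finset.sum_congr rfl fun b _ => ?_
      rw [map_mul]; ring
    rw [e2]
    have e3 : ∑ b : ZMod p, quadraticChar (ZMod p) (b ^ 2 + 2 * l * b + 1) = -1 := by
      rw [Finset.sum_congr rfl fun b (_ : b ∈ univ) =>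
        by rw [show b ^ 2 + 2 * l * b + 1 = (b + l) ^ 2 + (1 - l ^ 2) from by ring]]
      have := Equiv.sum_comp (Equiv.addRight l)
        fun x => quadraticChar (ZMod p) (x ^ 2 + (1 - l ^ 2))
      simp only [Equiv.coe_addRight] at this
      rw [this]
      exact sum_sq_add hp2 hc
    rw [e3]
    ring
  have hB : ∑ x : ZMod p, quadraticChar (ZMod p) (x ^ 3 + 2 * l * x ^ 2 - 4 * x - 8 * l)
      = ∑ b : ZMod p, quadraticChar (ZMod p) (b * (b ^ 2 + 2 * l * b + 1)) := by
    rw [Finset.sum_congr rfl fun x (_ : x ∈ univ) =>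
      by rw [show x ^ 3 + 2 * l * x ^ 2 - 4 * x - 8 * l = (x ^ 2 - 4) * (x + 2 * l) from by ring,
             map_mul]]
    have e2 : ∑ x : ZMod p, quadraticChar (ZMod p) (x ^ 2 - 4) * quadraticChar (ZMod p) (x + 2 * l)
        = (∑ x : ZMod p,
            ((quadraticChar (ZMod p) (x ^ 2 - 4) + 1)) * quadraticChar (ZMod p) (x + 2 * l))
          - ∑ x : ZMod p, quadraticChar (ZMod p) (x + 2 * l) := by
      rw [← Finset.sum_sub_distrib]
      exact Finset.sum_congr rfl fun x _ => by ring
    rw [e2, sum_shift hp2 (2 * l), sub_zero]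
    have e3 : ∑ x : ZMod p,
        (quadraticChar (ZMod p) (x ^ 2 - 4) + 1) * quadraticChar (ZMod p) (x + 2 * l)
        = ∑ xy ∈ univ.filter (fun xy : ZMod p × ZMod p => xy.2 ^ 2 = xy.1 ^ 2 - 4),
            quadraticChar (ZMod p) (xy.1 + 2 * l) := by
      rw [Finset.sum_filter, Fintype.sum_prod_type]
      refine Finset.sum_congr rfl fun x _ => ?_
      rw [← Finset.sum_filter]
      simp only []
      rw [Finset.sum_const, ← chi_card hp2 (x ^ 2 - 4)]
      simp [mul_comm]
    rw [e3, conic_sum hp2 h2 h4 (2 * l)]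
  have final : ((Finset.univ.filter (fun uv : ZMod p × ZMod p =>
      uv.2 ^ 2 = uv.1 ^ 4 + 2 * l * uv.1 ^ 2 + 1)).card : ℤ) + 1
      = ((Finset.univ.filter (fun xy : ZMod p × ZMod p =>
        xy.2 ^ 2 = xy.1 ^ 3 + 2 * l * xy.1 ^ 2 - 4 * xy.1 - 8 * l)).card : ℤ) := by
    rw [hq, hw, hA, hB]; ring
  exact_mod_cast final
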